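/- Let G be a group that is neither trivial nor isomorphic to ℤ/2ℤ, and suppose G admits a graded regular poset representation: a regular poset representation by a partial order P for which there exists a function ρ : P → ℤ such that x < y implies ρ(x) < ρ(y), and whenever y covers x one has ρ(y) = ρ(x) + 1. Then G is indicable, i.e., there exists a surjective group homomorphism G → ℤ. -/

import Mathlib

/-- If a group `G`, neither trivial nor `ℤ/2ℤ`, admits a graded
regular poset representation — a partial order `P` with `G ≃* Aut(P)`, the action free
and transitive, and a rank function `rk : P → ℤ` with `x < y → rk x < rk y` and
`rk y = rk x + 1` whenever `y` covers `x` — then `G` is indicable. -/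
theorem indicable_of_graded_regular_rep (G : Type*) [Group G]
    (hnt : Nontrivial G) (h2 : IsEmpty (G ≃* Multiplicative (ZMod 2)))
    (P : Type*) [PartialOrder P] (ρ : G ≃* (P ≃o P))
    (hfree : ∀ (g : G) (p : P), ρ g p = p → g = 1)
    (htrans : ∀ p q : P, ∃ g : G, ρ g p = q)
    (rk : P → ℤ)
    (hrk₁ : ∀ x y : P, x < y → rk x < rk y)
    (hrk₂ : ∀ x y : P, x ⋖ y → rk y = rk x + 1) :
    ∃ f : G →* Multiplicative ℤ, Function.Surjective f := by
  classical
  -- the comparability relation and its reflexive-transitive closure (connectedness)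
  set s : P → P → Prop := fun a b => a ≤ b ∨ b ≤ a with hs
  set c : P → P → Prop := Relation.ReflTransGen s with hc
  have hcrefl : ∀ x : P, c x x := fun _ => Relation.ReflTransGen.refl
  have hcsymm : ∀ {x y : P}, c x y → c y x := by
    intro x y h
    exact (@Relation.ReflTransGen.stdSymm _ s ⟨fun a b hab => Or.symm hab⟩).symm _ _ h
  have hctrans : ∀ {x y z : P}, c x y → c y z → c x z :=
    fun h1 h2 => Relation.ReflTransGen.trans h1 h2
  have hcmap : ∀ (e : P ≃o P) {x y : P}, c x y → c (e x) (e y) := by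
    intro e x y h
    exact Relation.ReflTransGen.lift (p := s) e
      (fun a b (hab : s a b) => hab.imp (fun h' => e.le_iff_le.mpr h') (fun h' => e.le_iff_le.mpr h')) x y h
  -- applying products of group elements
  have happ : ∀ (g h : G) (x : P), ρ (g * h) x = ρ g (ρ h x) := by
    intro g h x; rw [map_mul]; rfl
  have hinvapp : ∀ (g : G) (x : P), ρ g⁻¹ (ρ g x) = x := by
    intro g x
    rw [← happ, inv_mul_cancel, map_one]; rfl
  have hinvapp' : ∀ (g : G) (x : P), ρ g (ρ g⁻¹ x) = x := by
    intro g x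
    rw [← happ, mul_inv_cancel, map_one]; rfl
  -- P is nontrivial
  have hPnt : Nontrivial P := by
    by_contra h
    rw [not_nontrivial_iff_subsingleton] at h
    obtain ⟨a, b, hab⟩ := hnt
    apply hab
    apply ρ.injective
    apply OrderIso.ext
    funext x
    exact Subsingleton.elim _ _
  -- a single ≤-step keeps the connected class
  have hsame : ∀ (z x y : P), x ≤ y → (c x z ↔ c y z) := by
    intro z x y hle
    have hcxy : c x y := Relation.ReflTransGen.single (Or.inl hle)
    exact ⟨fun h => hctrans (hcsymm hcxy) h, fun h => hctrans hcxy h⟩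
  -- P is connected
  have hconn : ∀ x y : P, c x y := by
    by_contra hcon
    push_neg at hcon
    obtain ⟨x₀, y₀, hxy⟩ := hcon
    have hxy' : ¬ c y₀ x₀ := fun h => hxy (hcsymm h)
    have hne : x₀ ≠ y₀ := fun h => hxy (h ▸ hcrefl x₀)
    by_cases hr : ∃ r : P, ¬ c r x₀ ∧ ¬ c r y₀
    · -- at least three components: swap two of them, fixing the third pointwise
      obtain ⟨r, hr1, hr2⟩ := hr
      obtain ⟨g, hg⟩ := htrans x₀ y₀
      set F : P → P := fun x => if c x x₀ then ρ g x else if c x y₀ then ρ g⁻¹ x else x with hF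
      have hmap1 : ∀ x, c x x₀ → c (ρ g x) y₀ := by
        intro x h
        have := hcmap (ρ g) h
        rwa [hg] at this
      have hmap2 : ∀ x, c x y₀ → c (ρ g⁻¹ x) x₀ := by
        intro x h
        have h1 := hcmap (ρ g⁻¹) h
        rwa [show ρ g⁻¹ y₀ = x₀ by rw [← hg, hinvapp]] at h1
      have hdisj : ∀ x, c x x₀ → c x y₀ → False := fun x h1 h2 => hxy (hctrans (hcsymm h1) h2)
      have hFF : ∀ x, F (F x) = x := by
        intro x
        by_cases h1 : c x x₀
        · have h2 : c (ρ g x) y₀ := hmap1 x h1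
          have h3 : ¬ c (ρ g x) x₀ := fun h => hdisj _ h h2
          simp only [hF, if_pos h1, if_neg h3, if_pos h2, hinvapp]
        · by_cases h2 : c x y₀
          · have h3 : c (ρ g⁻¹ x) x₀ := hmap2 x h2
            simp only [hF, if_neg h1, if_pos h2, if_pos h3, hinvapp']
          · simp only [hF, if_neg h1, if_neg h2]
      have hmono : Monotone F := by
        intro x y hle
        have e1 := hsame x₀ x y hle
        have e2 := hsame y₀ x y hle
        by_cases h1 : c x x₀
        · simp only [hF, if_pos h1, if_pos (e1.mp h1)]
          exact (ρ g).monotone hle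
        · by_cases h2 : c x y₀
          · simp only [hF, if_neg h1, if_neg (fun h => h1 (e1.mpr h)), if_pos h2,
              if_pos (e2.mp h2)]
            exact (ρ g⁻¹).monotone hle
          · simp only [hF, if_neg h1, if_neg (fun h => h1 (e1.mpr h)), if_neg h2,
              if_neg (fun h => h2 (e2.mpr h))]
            exact hle
      set e : P ≃ P := ⟨F, F, hFF, hFF⟩ with he
      set τ : P ≃o P := Equiv.toOrderIso e hmono hmono with hτ
      have hτapp : ∀ x, τ x = F x := fun _ => rfl
      have hτr : τ r = r := by
        rw [hτapp]
        simp only [hF, if_neg hr1, if_neg hr2]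
      have hk1 : ρ.symm τ = 1 := hfree _ r (by rw [ρ.apply_symm_apply]; exact hτr)
      have hτ1 : τ = 1 := by
        rw [← ρ.apply_symm_apply τ, hk1, map_one]
      have : τ x₀ = y₀ := by
        rw [hτapp]
        simp only [hF, if_pos (hcrefl x₀)]
        exact hg
      rw [hτ1] at this
      exact hne this
    · -- exactly two components: the group has order at most two
      push_neg at hr
      have hH : ∀ h : G, c (ρ h x₀) x₀ → h = 1 := by
        intro h hh
        set F : P → P := fun x => if c x x₀ then ρ h x else x with hF
        set Fi : P → P := fun x => if c x x₀ then ρ h⁻¹ x else x with hFi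
        have hm1 : ∀ x, c x x₀ → c (ρ h x) x₀ := fun x hx => hctrans (hcmap (ρ h) hx) hh
        have hminv : c (ρ h⁻¹ x₀) x₀ := by
          have h1 := hcmap (ρ h⁻¹) hh
          rw [hinvapp] at h1
          exact hcsymm h1
        have hm2 : ∀ x, c x x₀ → c (ρ h⁻¹ x) x₀ := fun x hx =>
          hctrans (hcmap (ρ h⁻¹) hx) hminv
        have hlr : ∀ x, Fi (F x) = x := by
          intro x
          by_cases h1 : c x x₀
          · simp only [hF, hFi, if_pos h1, if_pos (hm1 x h1), hinvapp]
          · simp only [hF, hFi, if_neg h1]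
        have hrl : ∀ x, F (Fi x) = x := by
          intro x
          by_cases h1 : c x x₀
          · simp only [hF, hFi, if_pos h1, if_pos (hm2 x h1), hinvapp']
          · simp only [hF, hFi, if_neg h1]
        have hmonoF : Monotone F := by
          intro x y hle
          have e1 := hsame x₀ x y hle
          by_cases h1 : c x x₀
          · simp only [hF, if_pos h1, if_pos (e1.mp h1)]
            exact (ρ h).monotone hle
          · simp only [hF, if_neg h1, if_neg (fun hy => h1 (e1.mpr hy))]
            exact hle
        have hmonoFi : Monotone Fi := by
          intro x y hle
          have e1 := hsame x₀ x y hle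
          by_cases h1 : c x x₀
          · simp only [hFi, if_pos h1, if_pos (e1.mp h1)]
            exact (ρ h⁻¹).monotone hle
          · simp only [hFi, if_neg h1, if_neg (fun hy => h1 (e1.mpr hy))]
            exact hle
        set e : P ≃ P := ⟨F, Fi, hlr, hrl⟩ with he
        set τ : P ≃o P := Equiv.toOrderIso e hmonoF hmonoFi with hτ
        have hτapp : ∀ x, τ x = F x := fun _ => rfl
        have hτy : τ y₀ = y₀ := by
          rw [hτapp]
          simp only [hF, if_neg hxy']
        have hk1 : ρ.symm τ = 1 := hfree _ y₀ (by rw [ρ.apply_symm_apply]; exact hτy)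
        have hτ1 : τ = 1 := by
          rw [← ρ.apply_symm_apply τ, hk1, map_one]
        have hx : τ x₀ = ρ h x₀ := by
          rw [hτapp]
          simp only [hF, if_pos (hcrefl x₀)]
        rw [hτ1] at hx
        exact hfree h x₀ hx.symm
      have huniq : ∀ g₁ g₂ : G, g₁ ≠ 1 → g₂ ≠ 1 → g₁ = g₂ := by
        intro g₁ g₂ h1 h2
        have k1 : ¬ c (ρ g₁ x₀) x₀ := fun h => h1 (hH g₁ h)
        have k2 : ¬ c (ρ g₂ x₀) x₀ := fun h => h2 (hH g₂ h)
        have l1 : c (ρ g₁ x₀) y₀ := hr _ k1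
        have l2 : c (ρ g₂ x₀) y₀ := hr _ k2
        have l3 : c (ρ g₁ x₀) (ρ g₂ x₀) := hctrans l1 (hcsymm l2)
        have l4 := hcmap (ρ g₁⁻¹) l3
        rw [hinvapp] at l4
        have l5 : c (ρ (g₁⁻¹ * g₂) x₀) x₀ := by rw [happ]; exact hcsymm l4
        exact inv_mul_eq_one.mp (hH _ l5)
      obtain ⟨a, ha⟩ := exists_ne (1 : G)
      have hsq : a * a = 1 := by
        by_contra h
        have h' := huniq (a * a) a h ha
        have : a * a = a * 1 := by rw [h', mul_one]
        exact ha (mul_left_cancel this)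
      set φ0 : G → Multiplicative (ZMod 2) :=
        fun g => if g = 1 then 1 else Multiplicative.ofAdd 1 with hφ0
      have hhom : ∀ g₁ g₂ : G, φ0 (g₁ * g₂) = φ0 g₁ * φ0 g₂ := by
        intro g₁ g₂
        by_cases h1 : g₁ = 1
        · simp [hφ0, h1]
        · by_cases hg2 : g₂ = 1
          · simp [hφ0, hg2]
          · have hgg : g₁ = g₂ := huniq _ _ h1 hg2
            subst hgg
            have hk : g₁ * g₁ = 1 := by rw [huniq g₁ a h1 ha]; exact hsq
            rw [hk]
            simp only [hφ0, if_pos rfl, if_neg h1]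
            decide
      have hbij : Function.Bijective φ0 := by
        constructor
        · intro u v huv
          by_cases h1 : u = 1 <;> by_cases hv : v = 1
          · rw [h1, hv]
          · simp only [hφ0, if_pos h1, if_neg hv] at huv
            exact absurd huv (by decide)
          · simp only [hφ0, if_neg h1, if_pos hv] at huv
            exact absurd huv (by decide)
          · exact huniq u v h1 hv
        · intro m
          have hm : m = 1 ∨ m = Multiplicative.ofAdd 1 := by
            revert m; decide
          rcases hm with hm | hm
          · exact ⟨1, by simp [hφ0, hm]⟩
          · exact ⟨a, by simp [hφ0, ha, hm]⟩
      exact (h2.false (MulEquiv.ofBijective (MonoidHom.mk' φ0 hhom) hbij)).elim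
  -- order isomorphisms preserve covers
  have hcov : ∀ (e : P ≃o P) (x y : P), x ⋖ y → e x ⋖ e y := by
    intro e x y h
    constructor
    · exact e.strictMono h.lt
    · intro z hz1 hz2
      have a1 : x < e.symm z := by
        have := e.symm.strictMono hz1
        rwa [e.symm_apply_apply] at this
      have a2 : e.symm z < y := by
        have := e.symm.strictMono hz2
        rwa [e.symm_apply_apply] at this
      exact h.2 a1 a2
  -- the displacement of rank is constant along comparable pairs
  have hdlt : ∀ n : ℕ, ∀ (g : G) (x y : P), x < y → (rk y - rk x).toNat ≤ n →
      rk (ρ g x) - rk x = rk (ρ g y) - rk y := by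
    intro n
    induction n with
    | zero =>
      intro g x y hlt hle
      exact absurd (hrk₁ x y hlt) (by omega)
    | succ n ih =>
      intro g x y hlt hle
      by_cases hcb : x ⋖ y
      · have h1 := hrk₂ x y hcb
        have h2 := hrk₂ _ _ (hcov (ρ g) x y hcb)
        omega
      · obtain ⟨z, hz1, hz2⟩ := exists_lt_lt_of_not_covBy hlt hcb
        have r1 := hrk₁ x z hz1
        have r2 := hrk₁ z y hz2
        have e1 := ih g x z hz1 (by omega)
        have e2 := ih g z y hz2 (by omega)
        omega
  -- hence constant on connected components, i.e. on all of P
  have hd : ∀ (g : G) (x y : P), c x y → rk (ρ g x) - rk x = rk (ρ g y) - rk y := by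
    intro g x y h
    induction h with
    | refl => rfl
    | tail _ hzy ih =>
      rcases hzy with h' | h'
      · rcases h'.lt_or_eq with h'' | h''
        · rw [ih]; exact hdlt _ g _ _ h'' le_rfl
        · rw [ih, h'']
      · rcases h'.lt_or_eq with h'' | h''
        · rw [ih]; exact (hdlt _ g _ _ h'' le_rfl).symm
        · rw [ih, h'']
  -- there is a strictly comparable pair
  have hpair : ∃ a b : P, a < b := by
    by_contra h
    push_neg at h
    have heq : ∀ x y : P, c x y → x = y := by
      intro x y hxy
      induction hxy with
      | refl => rfl
      | tail _ hzy ih =>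
        rcases hzy with h' | h'
        · rcases h'.lt_or_eq with h'' | h''
          · exact absurd h'' (h _ _)
          · exact ih.trans h''
        · rcases h'.lt_or_eq with h'' | h''
          · exact absurd h'' (h _ _)
          · exact ih.trans h''.symm
    obtain ⟨p₁, p₂, hp⟩ := hPnt
    exact hp (heq _ _ (hconn p₁ p₂))
  -- hence a covering pair
  have hcovpair : ∃ u v : P, u ⋖ v := by
    obtain ⟨a, b, hab⟩ := hpair
    have key : ∀ n : ℕ, ∀ a b : P, a < b → (rk b - rk a).toNat ≤ n → ∃ u v : P, u ⋖ v := by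
      intro n
      induction n with
      | zero =>
        intro a b h1 hle
        exact absurd (hrk₁ a b h1) (by omega)
      | succ n ih =>
        intro a b h1 hle
        by_cases hcb : a ⋖ b
        · exact ⟨a, b, hcb⟩
        · obtain ⟨z, hz1, hz2⟩ := exists_lt_lt_of_not_covBy h1 hcb
          have r1 := hrk₁ a z hz1
          have r2 := hrk₁ z b hz2
          exact ih a z hz1 (by omega)
    exact key _ a b hab le_rfl
  obtain ⟨u, v, huv⟩ := hcovpair
  -- the indicability homomorphism
  refine ⟨MonoidHom.mk' (fun g => Multiplicative.ofAdd (rk (ρ g u) - rk u)) ?_, ?_⟩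
  · intro g h
    rw [← ofAdd_add]
    apply congrArg
    have h1 : ρ (g * h) u = ρ g (ρ h u) := happ g h u
    have h2 := hd g u (ρ h u) (hconn u (ρ h u))
    rw [h1]
    omega
  · intro m
    obtain ⟨g, hg⟩ := htrans u v
    have hφg : Multiplicative.ofAdd (rk (ρ g u) - rk u) = Multiplicative.ofAdd (1 : ℤ) := by
      apply congrArg
      rw [hg, hrk₂ u v huv]
      ring
    refine ⟨g ^ (m.toAdd), ?_⟩
    rw [map_zpow]
    show (Multiplicative.ofAdd (rk (ρ g u) - rk u)) ^ (m.toAdd) = m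
    rw [hφg, ← Int.ofAdd_mul, one_mul]
    rfl
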